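/- Let n > p ≥ 1, let Y ∈ ℝⁿ and let X be a real n×p matrix. Let 𝟙 ∈ ℝⁿ be the all-ones vector, W = [𝟙 X] the n×(p+1) matrix obtained by prepending 𝟙 as a column, X̄ ∈ ℝ^p the vector of column means of X, Ȳ the mean of Y, X̃ = X − 𝟙X̄ᵀ the column-centered matrix and Ỹ = Y − Ȳ𝟙. Assume X̃ᵀX̃ is invertible. Then WᵀW is invertible, and the least-squares vector β̂ = (WᵀW)⁻¹WᵀY satisfies: its last p coordinates equal γ̂ = (X̃ᵀX̃)⁻¹X̃ᵀỸ and its first coordinate equals δ̂ = Ȳ − X̄ᵀγ̂. -/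

import Mathlib

open Matrix BigOperators

/-- With W = [𝟙 X] the design matrix with intercept, if the centered
Gram matrix X̃ᵀX̃ is invertible then so is WᵀW, and the least-squares vector
β̂ = (WᵀW)⁻¹WᵀY has last p coordinates γ̂ = (X̃ᵀX̃)⁻¹X̃ᵀỸ and first coordinate
δ̂ = Ȳ − X̄ᵀγ̂. -/
theorem least_squares_with_intercept (n p : ℕ) (hp : 1 ≤ p) (hn : p < n)
    (Y : Fin n → ℝ) (X : Matrix (Fin n) (Fin p) ℝ) :
    let W : Matrix (Fin n) (Fin (p + 1)) ℝ :=
      Matrix.of fun i j => Fin.cases (1 : ℝ) (fun k => X i k) j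
    let Xbar : Fin p → ℝ := fun j => (∑ i, X i j) / n
    let Ybar : ℝ := (∑ i, Y i) / n
    let Xc : Matrix (Fin n) (Fin p) ℝ := Matrix.of fun i j => X i j - Xbar j
    let Yc : Fin n → ℝ := fun i => Y i - Ybar
    ∀ _ : IsUnit (Xcᵀ * Xc).det,
      IsUnit (Wᵀ * W).det ∧
      (let βhat : Fin (p + 1) → ℝ := (Wᵀ * W)⁻¹ *ᵥ (Wᵀ *ᵥ Y)
       let γhat : Fin p → ℝ := (Xcᵀ * Xc)⁻¹ *ᵥ (Xcᵀ *ᵥ Yc)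
       (∀ k : Fin p, βhat k.succ = γhat k) ∧
       βhat 0 = Ybar - ∑ j, Xbar j * γhat j) := by
  intro W Xbar Ybar Xc Yc hM
  have hnpos : 0 < n := lt_of_le_of_lt (Nat.zero_le p) hn
  have hnR : (n : ℝ) ≠ 0 := Nat.cast_ne_zero.mpr hnpos.ne'
  -- centered columns sum to zero
  have hXc0 : ∀ k, ∑ i, Xc i k = 0 := by
    intro k
    simp only [Xc, Matrix.of_apply, Finset.sum_sub_distrib, Finset.sum_const,
      Finset.card_univ, Fintype.card_fin, nsmul_eq_mul, Xbar]
    field_simp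
    ring
  have hYc0 : ∑ i, Yc i = 0 := by
    simp only [Yc, Finset.sum_sub_distrib, Finset.sum_const, Finset.card_univ,
      Fintype.card_fin, nsmul_eq_mul, Ybar]
    field_simp
    ring
  -- the centered solution
  set γ : Fin p → ℝ := (Xcᵀ * Xc)⁻¹ *ᵥ (Xcᵀ *ᵥ Yc) with hγdef
  have hγ : (Xcᵀ * Xc) *ᵥ γ = Xcᵀ *ᵥ Yc := by
    rw [hγdef, Matrix.mulVec_mulVec, Matrix.mul_nonsing_inv _ hM, Matrix.one_mulVec]
  -- invertibility of WᵀW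
  have hWdet : IsUnit (Wᵀ * W).det := by
    rw [isUnit_iff_ne_zero]
    intro hdet
    obtain ⟨v, hv, hv0⟩ := Matrix.exists_mulVec_eq_zero_iff.mpr hdet
    have hWv : W *ᵥ v = 0 := by
      have h1 : (W *ᵥ v) ⬝ᵥ (W *ᵥ v) = 0 := by
        calc (W *ᵥ v) ⬝ᵥ (W *ᵥ v) = (v ᵥ* Wᵀ) ⬝ᵥ (W *ᵥ v) := by
              rw [Matrix.vecMul_transpose]
          _ = v ⬝ᵥ (Wᵀ *ᵥ (W *ᵥ v)) := (Matrix.dotProduct_mulVec _ _ _).symm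
          _ = v ⬝ᵥ ((Wᵀ * W) *ᵥ v) := by rw [Matrix.mulVec_mulVec]
          _ = 0 := by rw [hv0]; simp
      funext i
      have h2 : ∀ i ∈ Finset.univ, (0:ℝ) ≤ (W *ᵥ v) i * (W *ᵥ v) i :=
        fun i _ => mul_self_nonneg _
      have := (Finset.sum_eq_zero_iff_of_nonneg h2).mp h1 i (Finset.mem_univ i)
      exact mul_self_eq_zero.mp this
    -- from W *ᵥ v = 0 deduce v = 0
    set g : Fin p → ℝ := fun k => v k.succ with hgdef
    have hWvi : ∀ i, v 0 + ∑ k, X i k * g k = 0 := by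
      intro i
      have := congrFun hWv i
      simpa [Matrix.mulVec, dotProduct, W, Fin.sum_univ_succ] using this
    have hXcg : Xc *ᵥ g = fun _ => -v 0 - ∑ k, Xbar k * g k := by
      funext i
      have := hWvi i
      simp only [Matrix.mulVec, dotProduct, Xc, Matrix.of_apply, sub_mul,
        Finset.sum_sub_distrib]
      linarith
    have hMg : (Xcᵀ * Xc) *ᵥ g = 0 := by
      rw [← Matrix.mulVec_mulVec, hXcg]
      funext k
      simp only [Matrix.mulVec, dotProduct, Matrix.transpose_apply, Pi.zero_apply]
      rw [← Finset.sum_mul, hXc0 k, zero_mul]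
    have hg0 : g = 0 := by
      have : (Xcᵀ * Xc)⁻¹ *ᵥ ((Xcᵀ * Xc) *ᵥ g) = g := by
        rw [Matrix.mulVec_mulVec, Matrix.nonsing_inv_mul _ hM, Matrix.one_mulVec]
      rw [hMg] at this
      rw [← this]
      simp
    have hv00 : v 0 = 0 := by
      have i0 : Fin n := ⟨0, hnpos⟩
      have := hWvi i0
      rw [hg0] at this
      simpa using this
    apply hv
    funext j
    refine Fin.cases ?_ ?_ j
    · exact hv00
    · intro k
      have := congrFun hg0 k
      simpa [hgdef] using this
  refine ⟨hWdet, ?_⟩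
  intro βhat γhat
  -- candidate solution
  set β : Fin (p + 1) → ℝ := Fin.cons (Ybar - ∑ j, Xbar j * γ j) γ with hβdef
  -- residual
  set r : Fin n → ℝ := Xc *ᵥ γ - Yc with hrdef
  have hr0 : ∑ i, r i = 0 := by
    simp only [hrdef, Pi.sub_apply, Finset.sum_sub_distrib, hYc0, sub_zero]
    simp only [Matrix.mulVec, dotProduct]
    rw [Finset.sum_comm]
    refine Finset.sum_eq_zero fun k _ => ?_
    rw [← Finset.sum_mul, hXc0 k, zero_mul]
  have hXcr : Xcᵀ *ᵥ r = 0 := by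
    rw [hrdef, Matrix.mulVec_sub, Matrix.mulVec_mulVec, hγ, sub_self]
  have hWβ : W *ᵥ β = fun i => Y i + r i := by
    funext i
    simp only [Matrix.mulVec, dotProduct, W, Matrix.of_apply, Fin.sum_univ_succ,
      Fin.cases_zero, Fin.cases_succ, hβdef, Fin.cons_zero, Fin.cons_succ, hrdef,
      Pi.sub_apply, Yc, Xc, sub_mul, Finset.sum_sub_distrib]
    ring
  have hsolve : (Wᵀ * W) *ᵥ β = Wᵀ *ᵥ Y := by
    rw [← Matrix.mulVec_mulVec, hWβ]
    funext j
    simp only [Matrix.mulVec, dotProduct, Matrix.transpose_apply, mul_add,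
      Finset.sum_add_distrib]
    have hj : ∑ i, W i j * r i = 0 := by
      refine Fin.cases ?_ ?_ j
      · simpa [W] using hr0
      · intro k
        have h1 := congrFun hXcr k
        simp only [Matrix.mulVec, dotProduct, Matrix.transpose_apply, Xc,
          Matrix.of_apply, Pi.zero_apply, sub_mul, Finset.sum_sub_distrib] at h1
        have h2 : ∑ i, Xbar k * r i = 0 := by
          rw [← Finset.mul_sum, hr0, mul_zero]
        simp only [W, Matrix.of_apply, Fin.cases_succ]
        linarith
    rw [hj, add_zero]
  have hβeq : βhat = β := by
    show (Wᵀ * W)⁻¹ *ᵥ (Wᵀ *ᵥ Y) = β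
    rw [← hsolve, Matrix.mulVec_mulVec, Matrix.nonsing_inv_mul _ hWdet, Matrix.one_mulVec]
  constructor
  · intro k
    rw [hβeq, hβdef]
    simp [Fin.cons_succ, γhat]
  · rw [hβeq, hβdef]
    simp [Fin.cons_zero, γhat]
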